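/- Let W be a bounded below infinite subset of ℤ such that, writing ℤ_{≥1} \ W = {v₁ < v₂ < v₃ < …}, one has v_{i+1} - v_i → ∞ as i → ∞. Then W admits no minimal asymptotic complement in ℤ. -/

import Mathlib

open Pointwise Filter

def IsAddAsympCompl (W C : Set ℤ) : Prop :=
  C.Nonempty ∧ ((Set.univ : Set ℤ) \ (W + C)).Finite

def IsAddMinAsympCompl (W C : Set ℤ) : Prop :=
  IsAddAsympCompl W C ∧ ∀ c ∈ C, ¬ IsAddAsympCompl W (C \ {c})

theorem stmt_18 (W : Set ℤ) (hWbdd : BddBelow W) (hWinf : W.Infinite)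
    (v : ℕ → ℤ) (hv : StrictMono v)
    (hvr : Set.range v = {n : ℤ | 1 ≤ n} \ W)
    (hgap : Tendsto (fun i => v (i + 1) - v i) atTop atTop) :
    ¬ ∃ C : Set ℤ, IsAddMinAsympCompl W C := by
  rintro ⟨C, ⟨⟨hCne, hCcof⟩, hmin⟩⟩
  obtain ⟨b, hb⟩ := hWbdd
  -- C must be infinite
  have hCinf : C.Infinite := by
    by_contra hfin
    rw [Set.not_infinite] at hfin
    have hbdd : BddBelow (W + C) := BddBelow.add ⟨b, hb⟩ hfin.bddBelow
    obtain ⟨m, hm⟩ := hbdd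
    have hsub : Set.Iio m ⊆ Set.univ \ (W + C) := by
      intro x hx
      exact ⟨trivial, fun hxc => absurd (hm hxc) (not_le.mpr hx)⟩
    exact (Set.Iio_infinite m) (hCcof.subset hsub)
  obtain ⟨c, hc⟩ := hCne
  have h1 : (C \ {c}).Infinite := hCinf.diff (Set.finite_singleton c)
  obtain ⟨c1, hc1⟩ := h1.nonempty
  have h2 : ((C \ {c}) \ {c1}).Infinite := h1.diff (Set.finite_singleton c1)
  obtain ⟨c2, hc2⟩ := h2.nonempty
  have hne12 : c1 ≠ c2 := fun h => hc2.2 (by simp [h])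
  obtain ⟨c', c'', hc', hc'', hlt⟩ :
      ∃ c' c'', c' ∈ C \ {c} ∧ c'' ∈ C \ {c} ∧ c' < c'' := by
    rcases lt_or_gt_of_ne hne12 with h | h
    · exact ⟨c1, c2, hc1, hc2.1, h⟩
    · exact ⟨c2, c1, hc2.1, hc1, h⟩
  obtain ⟨N, hN⟩ :=
    Filter.eventually_atTop.mp (hgap.eventually (Filter.eventually_gt_atTop (c'' - c')))
  refine hmin c hc ⟨h1.nonempty, ?_⟩
  apply Set.Finite.subset
    (((hCcof.union (Set.finite_Icc (b + c) c'')).union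
      ((Set.finite_Iio N).image (fun j => c'' + v j))))
  rintro n ⟨-, hn⟩
  by_cases hWC : n ∈ W + C
  · obtain ⟨w, hw, c0, hc0, rfl⟩ := hWC
    have hc0c : c0 = c := by
      by_contra hne
      exact hn ⟨w, hw, c0, ⟨hc0, hne⟩, rfl⟩
    subst hc0c
    by_cases h3 : w + c0 ≤ c''
    · exact Or.inl (Or.inr ⟨add_le_add_left (hb hw) c0, h3⟩)
    · push_neg at h3
      have hw' : w + c0 - c' ∉ W := fun hmem =>
        hn ⟨w + c0 - c', hmem, c', hc', by ring⟩
      have hw'' : w + c0 - c'' ∉ W := fun hmem =>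
        hn ⟨w + c0 - c'', hmem, c'', hc'', by ring⟩
      have hi : w + c0 - c' ∈ Set.range v := by
        rw [hvr]; exact ⟨by simp only [Set.mem_setOf_eq]; omega, hw'⟩
      have hj : w + c0 - c'' ∈ Set.range v := by
        rw [hvr]; exact ⟨by simp only [Set.mem_setOf_eq]; omega, hw''⟩
      obtain ⟨i, hvi⟩ := hi
      obtain ⟨j, hvj⟩ := hj
      have hji : j < i := by
        rw [← hv.lt_iff_lt]; omega
      have hmono : v (j + 1) ≤ v i := hv.monotone hji
      have hjN : j < N := by
        by_contra hge
        push_neg at hge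
        have := hN j hge
        omega
      exact Or.inr ⟨j, hjN, show c'' + v j = w + c0 by omega⟩
  · exact Or.inl (Or.inl ⟨trivial, hWC⟩)
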